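/- arXiv:1801.08464 — 3 statements merged into one kernel-verified Lean document; each statement's English description precedes it below -/
import Mathlib

section
/- If A_ff and S = A_cc − A_cf A_ff⁻¹ A_fc are invertible, then the inverse of A satisfies the multigrid reduction identity A⁻¹ = P (R A P)⁻¹ R + Q (Qᵀ A Q)⁻¹ Qᵀ, where P, R, Q are the ideal interpolation, restriction, and injection operators. -/
open Matrix

theorem mgr_additive_identity {n m : Type*} [Fintype n] [Fintype m] [DecidableEq n] [DecidableEq m]
    (A_ff : Matrix n n ℝ) (A_fc : Matrix n m ℝ) (A_cf : Matrix m n ℝ) (A_cc : Matrix m m ℝ)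
    (hff : IsUnit A_ff) (hS : IsUnit (A_cc - A_cf * A_ff⁻¹ * A_fc)) :
    let A := fromBlocks A_ff A_fc A_cf A_cc
    let P := fromRows (-(A_ff⁻¹ * A_fc)) (1 : Matrix m m ℝ)
    let R := fromCols (-(A_cf * A_ff⁻¹)) (1 : Matrix m m ℝ)
    let Q := fromRows (1 : Matrix n n ℝ) (0 : Matrix m n ℝ)
    A⁻¹ = P * (R * A * P)⁻¹ * R + Q * (Qᵀ * A * Q)⁻¹ * Qᵀ := by
  intro A P R Q
  haveI iff : Invertible A_ff := hff.invertible
  have hinv : ⅟A_ff = A_ff⁻¹ := invOf_eq_nonsing_inv A_ff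
  haveI iS : Invertible (A_cc - A_cf * ⅟A_ff * A_fc) := by
    rw [hinv]; exact hS.invertible
  have hSinv : ⅟(A_cc - A_cf * ⅟A_ff * A_fc) = (A_cc - A_cf * A_ff⁻¹ * A_fc)⁻¹ := by
    rw [invOf_eq_nonsing_inv]; rw [hinv]
  haveI iA : Invertible A := fromBlocks₁₁Invertible A_ff A_fc A_cf A_cc
  -- compute R * A
  have hc : A_cf * A_ff⁻¹ * A_ff = A_cf := by
    rw [Matrix.mul_assoc, Matrix.inv_mul_of_invertible, Matrix.mul_one]
  have h1 : -(A_cf * A_ff⁻¹) * A_ff + (1 : Matrix m m ℝ) * A_cf = 0 := by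
    rw [Matrix.neg_mul, hc, Matrix.one_mul, neg_add_cancel]
  have h2 : -(A_cf * A_ff⁻¹) * A_fc + (1 : Matrix m m ℝ) * A_cc = A_cc - A_cf * A_ff⁻¹ * A_fc := by
    rw [Matrix.neg_mul, Matrix.one_mul]; abel
  have hRA : R * A = fromCols 0 (A_cc - A_cf * A_ff⁻¹ * A_fc) := by
    show fromCols _ _ * fromBlocks _ _ _ _ = _
    rw [fromCols_mul_fromBlocks, h1, h2]
  have hRAP : R * A * P = A_cc - A_cf * A_ff⁻¹ * A_fc := by
    rw [hRA]
    show fromCols _ _ * fromRows _ _ = _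
    rw [fromCols_mul_fromRows, Matrix.zero_mul, Matrix.mul_one, zero_add]
  -- compute Qᵀ * A * Q
  have hQT : Qᵀ = fromCols (1 : Matrix n n ℝ) (0 : Matrix n m ℝ) := by
    show (fromRows _ _)ᵀ = _
    rw [transpose_fromRows, transpose_one, transpose_zero]
  have hQAQ : Qᵀ * A * Q = A_ff := by
    rw [hQT]
    show fromCols _ _ * fromBlocks _ _ _ _ * fromRows _ _ = _
    rw [fromCols_mul_fromBlocks]
    simp [fromCols_mul_fromRows]
  rw [hRAP, hQAQ]
  -- left hand side
  have hA : A⁻¹ = ⅟A := (invOf_eq_nonsing_inv A).symm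
  rw [hA, invOf_fromBlocks₁₁_eq A_ff A_fc A_cf A_cc]
  -- right hand side
  show _ = fromRows (-(A_ff⁻¹ * A_fc)) (1 : Matrix m m ℝ) * (A_cc - A_cf * A_ff⁻¹ * A_fc)⁻¹ *
      fromCols (-(A_cf * A_ff⁻¹)) (1 : Matrix m m ℝ) +
      fromRows (1 : Matrix n n ℝ) (0 : Matrix m n ℝ) * A_ff⁻¹ * Qᵀ
  rw [hQT]
  rw [fromRows_mul, fromRows_mul_fromCols, fromRows_mul, fromRows_mul_fromCols,
    fromBlocks_add]
  simp only [hinv, hSinv]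
  congr 1 <;> simp [Matrix.mul_assoc] <;> abel
end

section
/- Under the same assumptions, the two-level multiplicative multigrid identity holds: (I − P(RAP)⁻¹RA)(I − Q(QᵀAQ)⁻¹QᵀA) = 0, and likewise with the two factors in the opposite order. -/
open Matrix

theorem mgr_multiplicative_identity {n m : Type*} [Fintype n] [Fintype m] [DecidableEq n]
    [DecidableEq m]
    (A_ff : Matrix n n ℝ) (A_fc : Matrix n m ℝ) (A_cf : Matrix m n ℝ) (A_cc : Matrix m m ℝ)
    (hff : IsUnit A_ff) (hS : IsUnit (A_cc - A_cf * A_ff⁻¹ * A_fc)) :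
    let A := fromBlocks A_ff A_fc A_cf A_cc
    let P := fromRows (-(A_ff⁻¹ * A_fc)) (1 : Matrix m m ℝ)
    let R := fromCols (-(A_cf * A_ff⁻¹)) (1 : Matrix m m ℝ)
    let Q := fromRows (1 : Matrix n n ℝ) (0 : Matrix m n ℝ)
    (1 - P * (R * A * P)⁻¹ * R * A) * (1 - Q * (Qᵀ * A * Q)⁻¹ * Qᵀ * A) = 0 ∧
    (1 - Q * (Qᵀ * A * Q)⁻¹ * Qᵀ * A) * (1 - P * (R * A * P)⁻¹ * R * A) = 0 := by
  intro A P R Q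
  set S : Matrix m m ℝ := A_cc - A_cf * A_ff⁻¹ * A_fc with hSdef
  have hffi : A_ff⁻¹ * A_ff = 1 := nonsing_inv_mul _ ((isUnit_iff_isUnit_det _).mp hff)
  have hffi' : A_ff * A_ff⁻¹ = 1 := mul_nonsing_inv _ ((isUnit_iff_isUnit_det _).mp hff)
  have hSi : S⁻¹ * S = 1 := nonsing_inv_mul _ ((isUnit_iff_isUnit_det _).mp hS)
  -- R * A
  have hRA : R * A = fromCols 0 S := by
    show fromCols (-(A_cf * A_ff⁻¹)) 1 * fromBlocks A_ff A_fc A_cf A_cc = _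
    rw [fromCols_mul_fromBlocks]
    rw [fromCols_ext_iff]
    constructor
    · simp [Matrix.mul_assoc, hffi]
    · rw [hSdef]; noncomm_ring; simp [Matrix.mul_assoc, add_comm]
  -- Qᵀ * A
  have hQt : Qᵀ = fromCols (1 : Matrix n n ℝ) (0 : Matrix n m ℝ) := by
    show (fromRows (1 : Matrix n n ℝ) (0 : Matrix m n ℝ))ᵀ = _
    rw [transpose_fromRows]; simp
  have hQA : Qᵀ * A = fromCols A_ff A_fc := by
    rw [hQt]
    show fromCols 1 0 * fromBlocks A_ff A_fc A_cf A_cc = _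
    rw [fromCols_mul_fromBlocks]; simp
  -- R A P = S
  have hRAP : R * A * P = S := by
    rw [hRA]
    show fromCols 0 S * fromRows (-(A_ff⁻¹ * A_fc)) 1 = S
    rw [fromCols_mul_fromRows]; simp
  -- Qᵀ A Q = A_ff
  have hQAQ : Qᵀ * A * Q = A_ff := by
    rw [hQA]
    show fromCols A_ff A_fc * fromRows 1 0 = A_ff
    rw [fromCols_mul_fromRows]; simp
  -- first correction
  have hX : P * (R * A * P)⁻¹ * R * A =
      fromBlocks 0 (-(A_ff⁻¹ * A_fc)) 0 1 := by
    rw [hRAP, Matrix.mul_assoc, hRA]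
    have : (S⁻¹ : Matrix m m ℝ) * fromCols (0 : Matrix m n ℝ) S =
        fromCols (0 : Matrix m n ℝ) 1 := by
      rw [mul_fromCols]; simp [hSi]
    rw [Matrix.mul_assoc P, this]
    show fromRows (-(A_ff⁻¹ * A_fc)) 1 * fromCols (0 : Matrix m n ℝ) 1 = _
    rw [fromRows_mul_fromCols]; simp
  -- second correction
  have hY : Q * (Qᵀ * A * Q)⁻¹ * Qᵀ * A =
      fromBlocks 1 (A_ff⁻¹ * A_fc) 0 0 := by
    rw [hQAQ, Matrix.mul_assoc, hQA]
    have : (A_ff⁻¹ : Matrix n n ℝ) * fromCols A_ff A_fc =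
        fromCols (1 : Matrix n n ℝ) (A_ff⁻¹ * A_fc) := by
      rw [mul_fromCols, hffi]
    rw [Matrix.mul_assoc Q, this]
    show fromRows 1 0 * fromCols 1 (A_ff⁻¹ * A_fc) = _
    rw [fromRows_mul_fromCols]; simp
  rw [hX, hY]
  have hone : (1 : Matrix (n ⊕ m) (n ⊕ m) ℝ) = fromBlocks 1 0 0 1 :=
    (fromBlocks_one).symm
  have hsub : ∀ (a a' : Matrix n n ℝ) (b b' : Matrix n m ℝ) (c c' : Matrix m n ℝ)
      (d d' : Matrix m m ℝ), fromBlocks a b c d - fromBlocks a' b' c' d' =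
      fromBlocks (a - a') (b - b') (c - c') (d - d') := by
    intros; ext (i | i) (j | j) <;> simp [fromBlocks]
  constructor <;>
  · rw [hone, hsub, hsub, fromBlocks_multiply]
    simp [← fromBlocks_zero]
end

section
/- Let M_f and M_c be invertible matrices and define the error propagator E = (I − P M_c⁻¹ R A)(I − M_f⁻¹ A) with P, R, Q ideal. If M_c = RAP and M_f⁻¹ = Q(QᵀAQ)⁻¹Qᵀ, then E = 0; hence the corresponding preconditioner M_MGR satisfies M_MGR⁻¹A = I, i.e., M_MGR = A. -/
open Matrix


lemma fromBlocks_sub' {l m n o R : Type*} [Sub R] (A : Matrix n l R) (B : Matrix n m R)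
    (C : Matrix o l R) (D : Matrix o m R) (A' : Matrix n l R) (B' : Matrix n m R)
    (C' : Matrix o l R) (D' : Matrix o m R) :
    fromBlocks A B C D - fromBlocks A' B' C' D' =
      fromBlocks (A - A') (B - B') (C - C') (D - D') := by
  ext (i | i) (j | j) <;> rfl

lemma fromColumns_fromRows_zero {m₁ m₂ n₁ n₂ R : Type*} [Zero R]
    (B₁₁ : Matrix m₁ n₁ R) (B₂₁ : Matrix m₂ n₁ R) :
    fromCols (fromRows B₁₁ B₂₁) (0 : Matrix (m₁ ⊕ m₂) n₂ R) = fromBlocks B₁₁ 0 B₂₁ 0 := by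
  ext (i | i) (j | j) <;> simp [fromRows, fromCols, fromBlocks] <;> rfl

theorem mgr_ideal_preconditioner {n m : Type*} [Fintype n] [Fintype m] [DecidableEq n]
    [DecidableEq m]
    (A_ff : Matrix n n ℝ) (A_fc : Matrix n m ℝ) (A_cf : Matrix m n ℝ) (A_cc : Matrix m m ℝ)
    (hff : IsUnit A_ff) (hS : IsUnit (A_cc - A_cf * A_ff⁻¹ * A_fc))
    (M_c : Matrix m m ℝ) (Mf_inv : Matrix (n ⊕ m) (n ⊕ m) ℝ)
    (hMc : M_c = fromCols (-(A_cf * A_ff⁻¹)) (1 : Matrix m m ℝ) *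
        fromBlocks A_ff A_fc A_cf A_cc * fromRows (-(A_ff⁻¹ * A_fc)) (1 : Matrix m m ℝ))
    (hMf : Mf_inv = fromRows (1 : Matrix n n ℝ) (0 : Matrix m n ℝ) *
        ((fromRows (1 : Matrix n n ℝ) (0 : Matrix m n ℝ))ᵀ * fromBlocks A_ff A_fc A_cf A_cc *
          fromRows (1 : Matrix n n ℝ) (0 : Matrix m n ℝ))⁻¹ *
        (fromRows (1 : Matrix n n ℝ) (0 : Matrix m n ℝ))ᵀ) :
    let A := fromBlocks A_ff A_fc A_cf A_cc
    let P := fromRows (-(A_ff⁻¹ * A_fc)) (1 : Matrix m m ℝ)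
    let R := fromCols (-(A_cf * A_ff⁻¹)) (1 : Matrix m m ℝ)
    (1 - P * M_c⁻¹ * R * A) * (1 - Mf_inv * A) = 0 ∧
    ∀ M_MGR : Matrix (n ⊕ m) (n ⊕ m) ℝ, IsUnit M_MGR →
      1 - M_MGR⁻¹ * A = (1 - P * M_c⁻¹ * R * A) * (1 - Mf_inv * A) →
      M_MGR⁻¹ * A = 1 ∧ M_MGR = A := by
  intro A P R
  have hdet : IsUnit A_ff.det := (isUnit_iff_isUnit_det _).mp hff
  have h1 : A_ff⁻¹ * A_ff = 1 := nonsing_inv_mul _ hdet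
  have h2 : A_ff * A_ff⁻¹ = 1 := mul_nonsing_inv _ hdet
  set S := A_cc - A_cf * A_ff⁻¹ * A_fc with hSdef
  have hSdet : IsUnit S.det := (isUnit_iff_isUnit_det _).mp hS
  have hS1 : S⁻¹ * S = 1 := nonsing_inv_mul _ hSdet
  have hMcS : M_c = S := by
    rw [hMc, fromCols_mul_fromBlocks, fromCols_mul_fromRows, hSdef]
    simp [Matrix.mul_assoc, h1, h2, sub_eq_add_neg, add_comm]
  have hMfB : Mf_inv = fromBlocks A_ff⁻¹ 0 0 0 := by
    rw [hMf, transpose_fromRows, transpose_one, transpose_zero,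
      fromCols_mul_fromBlocks, fromCols_mul_fromRows]
    simp [fromRows_mul, mul_fromCols, fromColumns_fromRows_zero]
  have hEf : (1 : Matrix (n ⊕ m) (n ⊕ m) ℝ) - Mf_inv * A =
      fromBlocks 0 (-(A_ff⁻¹ * A_fc)) 0 1 := by
    rw [hMfB]
    show (1 : Matrix (n ⊕ m) (n ⊕ m) ℝ) - _ * fromBlocks A_ff A_fc A_cf A_cc = _
    rw [fromBlocks_multiply, ← fromBlocks_one, fromBlocks_sub']
    simp [h1]
  have hRA : R * A = fromCols 0 S := by
    show fromCols _ _ * fromBlocks A_ff A_fc A_cf A_cc = _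
    rw [fromCols_mul_fromBlocks, hSdef]
    simp [Matrix.mul_assoc, h1]
    congr 1
    try abel
  have hEc : (1 : Matrix (n ⊕ m) (n ⊕ m) ℝ) - P * M_c⁻¹ * R * A =
      fromBlocks 1 (A_ff⁻¹ * A_fc) 0 0 := by
    have : P * M_c⁻¹ * R * A = P * M_c⁻¹ * (R * A) := by rw [Matrix.mul_assoc]
    rw [this, hRA, hMcS]
    show (1 : Matrix (n ⊕ m) (n ⊕ m) ℝ) - fromRows _ _ * S⁻¹ * fromCols 0 S = _
    rw [fromRows_mul, fromRows_mul_fromCols, ← fromBlocks_one, fromBlocks_sub']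
    simp [Matrix.mul_assoc, hS1]
  constructor
  · rw [hEf, hEc, fromBlocks_multiply]
    simp
  · intro M hM hEq
    rw [hEf, hEc, fromBlocks_multiply] at hEq
    simp at hEq
    have hMA : M⁻¹ * A = 1 := (sub_eq_zero.mp hEq).symm
    refine ⟨hMA, ?_⟩
    calc M = M * (M⁻¹ * A) := by rw [hMA, Matrix.mul_one]
    _ = (M * M⁻¹) * A := by rw [Matrix.mul_assoc]
    _ = A := by rw [Matrix.mul_nonsing_inv _ ((isUnit_iff_isUnit_det _).mp hM), Matrix.one_mul]
end
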